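/- Let d > τ ≥ 1 be natural numbers, γ > 0 a real number, U ∈ ℝ^{d×τ} a semi-orthogonal matrix, and σ ∈ ℝ^τ a vector with nonnegative entries. Then G := γ I + U diag(σ) Uᵀ is symmetric positive definite, and the eigenvalues of G⁻¹ satisfy 0 < λ_min(G⁻¹) ≤ λ_max(G⁻¹) = γ⁻¹; in particular the largest eigenvalue of G⁻¹ equals exactly γ⁻¹. -/

import Mathlib

open Matrix

/-- Lemma 1: for `d > τ ≥ 1`, `γ > 0`, semi-orthogonal `U` and `σ ≥ 0`, the
matrix `G = γ I + U diag(σ) Uᵀ` is symmetric positive definite, and the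
eigenvalues of `G⁻¹` satisfy `0 < λ_min(G⁻¹) ≤ λ_max(G⁻¹) = γ⁻¹`. -/
theorem ginger_lemma1 (d τ : ℕ) (hτ : 1 ≤ τ) (hdτ : τ < d) (γ : ℝ) (hγ : 0 < γ)
    (U : Matrix (Fin d) (Fin τ) ℝ) (hU : Uᵀ * U = 1)
    (σ : Fin τ → ℝ) (hσ : ∀ i, 0 ≤ σ i)
    (G : Matrix (Fin d) (Fin d) ℝ)
    (hG : G = γ • (1 : Matrix (Fin d) (Fin d) ℝ) + U * Matrix.diagonal σ * Uᵀ) :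
    G.PosDef ∧
      ∀ hH : (G⁻¹).IsHermitian,
        (0 < ⨅ i, hH.eigenvalues i) ∧
        ((⨅ i, hH.eigenvalues i) ≤ ⨆ i, hH.eigenvalues i) ∧
        ((⨆ i, hH.eigenvalues i) = γ⁻¹) := by
  have hd : 0 < d := lt_of_le_of_lt (Nat.zero_le τ) hdτ
  have : Nonempty (Fin d) := ⟨⟨0, hd⟩⟩
  -- The middle term is positive semidefinite
  have hUH : Uᴴ = Uᵀ := by ext i j; simp
  have hPSD : (U * Matrix.diagonal σ * Uᵀ).PosSemidef := by
    rw [← hUH]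
    exact (Matrix.PosSemidef.diagonal (fun i => hσ i)).mul_mul_conjTranspose_same U
  -- G is positive definite
  have hGpd : G.PosDef := by
    rw [hG]
    have h1 : (γ • (1 : Matrix (Fin d) (Fin d) ℝ)).PosDef := by
      rw [Matrix.smul_one_eq_diagonal]
      exact Matrix.posDef_diagonal_iff.mpr (fun _ => hγ)
    exact h1.add_posSemidef hPSD
  refine ⟨hGpd, fun hH => ?_⟩
  have hGinv : (G⁻¹).PosDef := hGpd.inv
  have hdet : IsUnit G.det := hGpd.det_pos.ne'.isUnit
  have hpos : ∀ i, 0 < hH.eigenvalues i := by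
    intro i
    have := hGinv.eigenvalues_pos i
    convert this using 2
  -- each eigenvalue of G⁻¹ is at most γ⁻¹
  have hub : ∀ i, hH.eigenvalues i ≤ γ⁻¹ := by
    intro i
    set t := hH.eigenvalues i with htdef
    set v : Fin d → ℝ := ⇑(hH.eigenvectorBasis i) with hvdef
    have hv0 : v ≠ 0 := by
      have := hH.eigenvectorBasis.orthonormal.ne_zero i
      intro h
      apply this
      ext j
      exact congrFun h j
    have hmv : G⁻¹ *ᵥ v = t • v := hH.mulVec_eigenvectorBasis i
    have ht : 0 < t := hpos i
    have hid : G *ᵥ (G⁻¹ *ᵥ v) = v := by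
      rw [Matrix.mulVec_mulVec, Matrix.mul_nonsing_inv G hdet, Matrix.one_mulVec]
    rw [hmv, Matrix.mulVec_smul] at hid
    have hGv : G *ᵥ v = t⁻¹ • v := by
      apply smul_right_injective (Fin d → ℝ) ht.ne'
      show t • (G *ᵥ v) = t • (t⁻¹ • v)
      rw [hid, smul_smul, mul_inv_cancel₀ ht.ne', one_smul]
    -- quadratic form computation
    have hvv : 0 < v ⬝ᵥ v := by
      have := Matrix.dotProduct_star_self_pos_iff (R := ℝ) (v := v) |>.mpr hv0
      simpa using this
    have hq : 0 ≤ v ⬝ᵥ ((U * Matrix.diagonal σ * Uᵀ) *ᵥ v) := by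
      have := hPSD.dotProduct_mulVec_nonneg v
      simpa using this
    have hquad : t⁻¹ * (v ⬝ᵥ v) = γ * (v ⬝ᵥ v) + v ⬝ᵥ ((U * Matrix.diagonal σ * Uᵀ) *ᵥ v) := by
      have h1 : v ⬝ᵥ (G *ᵥ v) = t⁻¹ * (v ⬝ᵥ v) := by
        rw [hGv, dotProduct_smul]; rfl
      have h2 : v ⬝ᵥ (G *ᵥ v)
          = γ * (v ⬝ᵥ v) + v ⬝ᵥ ((U * Matrix.diagonal σ * Uᵀ) *ᵥ v) := by
        rw [hG, Matrix.add_mulVec, dotProduct_add, Matrix.smul_mulVec,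
          Matrix.one_mulVec, dotProduct_smul]
        rfl
      rw [← h1, h2]
    have hγt : γ ≤ t⁻¹ := by
      have : γ * (v ⬝ᵥ v) ≤ t⁻¹ * (v ⬝ᵥ v) := by
        rw [hquad]; linarith
      exact le_of_mul_le_mul_right (by linarith) hvv
    calc t = (t⁻¹)⁻¹ := (inv_inv t).symm
      _ ≤ γ⁻¹ := by
        apply inv_anti₀ hγ hγt
  -- there is an eigenvalue equal to γ⁻¹
  have hex : ∃ i, hH.eigenvalues i = γ⁻¹ := by
    -- find a nonzero vector in the kernel of Uᵀ
    have hni : ¬ Function.Injective (Uᵀ.mulVecLin) := by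
      intro hinj
      have := LinearMap.finrank_le_finrank_of_injective hinj
      simp only [Module.finrank_pi, Fintype.card_fin] at this
      omega
    obtain ⟨x, y, hxy, hne⟩ := Function.not_injective_iff.mp hni
    set v : Fin d → ℝ := x - y with hvdef
    have hv0 : v ≠ 0 := sub_ne_zero.mpr hne
    have hker : Uᵀ *ᵥ v = 0 := by
      have h : Uᵀ.mulVecLin (x - y) = 0 := by
        rw [map_sub, hxy, sub_self]
      rw [Matrix.mulVecLin_apply] at h
      exact h
    have hGv : G *ᵥ v = γ • v := by
      rw [hG, Matrix.add_mulVec, Matrix.smul_mulVec, Matrix.one_mulVec,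
        ← Matrix.mulVec_mulVec, ← Matrix.mulVec_mulVec, hker]
      simp
    have hGinvv : G⁻¹ *ᵥ v = γ⁻¹ • v := by
      have hid : G⁻¹ *ᵥ (G *ᵥ v) = v := by
        rw [Matrix.mulVec_mulVec, Matrix.nonsing_inv_mul G hdet, Matrix.one_mulVec]
      rw [hGv, Matrix.mulVec_smul] at hid
      apply smul_right_injective (Fin d → ℝ) hγ.ne'
      show γ • (G⁻¹ *ᵥ v) = γ • (γ⁻¹ • v)
      rw [hid, smul_smul, mul_inv_cancel₀ hγ.ne', one_smul]
    have hspec : γ⁻¹ ∈ spectrum ℝ (G⁻¹) := by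
      rw [← AlgEquiv.spectrum_eq (Matrix.toLinAlgEquiv (Pi.basisFun ℝ (Fin d))),
        ← Module.End.hasEigenvalue_iff_mem_spectrum]
      apply Module.End.hasEigenvalue_of_hasEigenvector (x := v)
      refine ⟨Module.End.mem_eigenspace_iff.mpr ?_, hv0⟩
      rw [Matrix.toLinAlgEquiv_apply]
      have hr : ⇑((Pi.basisFun ℝ (Fin d)).repr v) = v := funext (fun k => Pi.basisFun_repr (x := v) (i := k))
      rw [hr, hGinvv]
      ext k
      simp [Finset.sum_apply, Pi.single_apply]
    have := hH.spectrum_real_eq_range_eigenvalues ▸ hspec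
    obtain ⟨i, hi⟩ := this
    exact ⟨i, hi⟩
  obtain ⟨i₀, hi₀⟩ := hex
  have hbddA : BddAbove (Set.range hH.eigenvalues) := Set.Finite.bddAbove (Set.finite_range _)
  have hbddB : BddBelow (Set.range hH.eigenvalues) := Set.Finite.bddBelow (Set.finite_range _)
  have hsup : (⨆ i, hH.eigenvalues i) = γ⁻¹ := by
    apply le_antisymm
    · exact ciSup_le hub
    · rw [← hi₀]; exact le_ciSup hbddA i₀
  refine ⟨?_, ?_, hsup⟩
  · obtain ⟨j, hj⟩ := exists_eq_ciInf_of_finite (f := hH.eigenvalues)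
    rw [← hj]; exact hpos j
  · exact le_trans (ciInf_le hbddB i₀) (le_trans (hi₀.le) (le_of_eq hsup.symm))
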